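/- Let a, b ∈ ℝ and σ > 0. Then for every s ≥ 0, the product measure N(a, σ²) ⊗ N(b, σ²) satisfies (N(a, σ²) ⊗ N(b, σ²)){(x, y) : x² + y² > s} = Q₁(√(a² + b²)/σ, √s/σ). -/

import Mathlib

open MeasureTheory ProbabilityTheory

/-- The modified Bessel function of the first kind of order zero,
`I₀(x) = ∑_{k=0}^∞ (x/2)^(2k) / (k!)²`. -/
noncomputable def besselI0 (x : ℝ) : ℝ :=
  ∑' k : ℕ, (x / 2) ^ (2 * k) / ((Nat.factorial k : ℝ)) ^ 2

/-- The first-order Marcum Q-function, `Q₁(α, β) = ∫_β^∞ x e^{-(x²+α²)/2} I₀(αx) dx`. -/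
noncomputable def marcumQ1 (α β : ℝ) : ℝ :=
  ∫ x in Set.Ici β, x * Real.exp (-(x ^ 2 + α ^ 2) / 2) * besselI0 (α * x)

section Aux

open Real Set Filter intervalIntegral
open scoped NNReal ENNReal

lemma besselI0_term_eq (x : ℝ) (k : ℕ) :
    (x / 2) ^ (2 * k) / ((Nat.factorial k : ℝ)) ^ 2
      = (x ^ 2 / 4) ^ k / ((Nat.factorial k : ℝ)) ^ 2 := by
  rw [pow_mul]; ring_nf

lemma summable_besselI0 (x : ℝ) :
    Summable (fun k : ℕ => (x / 2) ^ (2 * k) / ((Nat.factorial k : ℝ)) ^ 2) := by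
  simp only [besselI0_term_eq]
  refine Summable.of_nonneg_of_le (fun k => by positivity) (fun k => ?_)
    (Real.summable_pow_div_factorial (x ^ 2 / 4))
  have hk : (1 : ℝ) ≤ (Nat.factorial k : ℝ) := by
    exact_mod_cast Nat.one_le_iff_ne_zero.mpr k.factorial_ne_zero
  exact div_le_div_of_nonneg_left (by positivity) (by positivity) (by nlinarith)

lemma prod_odd_div (k : ℕ) :
    ∏ i ∈ Finset.range k, (2 * (i : ℝ) + 1) / (2 * i + 2)
      = (Nat.factorial (2 * k) : ℝ) / (4 ^ k * ((Nat.factorial k : ℝ)) ^ 2) := by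
  induction k with
  | zero => simp
  | succ k ih =>
    rw [Finset.prod_range_succ, ih]
    have h1 : 2 * (k + 1) = (2 * k + 1) + 1 := by ring
    rw [h1, Nat.factorial_succ, Nat.factorial_succ, Nat.factorial_succ]
    have hf : ((Nat.factorial (2 * k) : ℝ)) ≠ 0 := Nat.cast_ne_zero.mpr (Nat.factorial_ne_zero _)
    have hf2 : ((Nat.factorial k : ℝ)) ≠ 0 := Nat.cast_ne_zero.mpr (Nat.factorial_ne_zero _)
    have h4 : (4 : ℝ) ^ k ≠ 0 := by positivity
    push_cast
    field_simp
    ring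

lemma integral_cos_pow_sym (n : ℕ) :
    ∫ x in (-π)..π, cos x ^ n = (1 + (-1 : ℝ) ^ n) * ∫ x in (0)..π, sin x ^ n := by
  have hper : Function.Periodic (fun x => sin x ^ n) (2 * π) := fun x => by
    simp [Real.sin_periodic x]
  have h1 : ∫ x in (-π)..π, cos x ^ n = ∫ x in (-π)..π, sin (x + π / 2) ^ n := by
    refine intervalIntegral.integral_congr fun x _ => ?_
    rw [Real.sin_add_pi_div_two]
  rw [h1, intervalIntegral.integral_comp_add_right (fun x => sin x ^ n) (π / 2)]
  have h2 : ∫ x in (-π + π / 2)..(π + π / 2), sin x ^ n = ∫ x in (0:ℝ)..(2 * π), sin x ^ n := by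
    have := hper.intervalIntegral_add_eq (-π + π / 2) 0
    rw [show -π + π / 2 + 2 * π = π + π / 2 by ring, show (0:ℝ) + 2 * π = 2 * π by ring] at this
    exact this
  rw [h2]
  have h3 : ∫ x in (0:ℝ)..(2 * π), sin x ^ n
      = (∫ x in (0:ℝ)..π, sin x ^ n) + ∫ x in π..(2 * π), sin x ^ n :=
    (intervalIntegral.integral_add_adjacent_intervals
      ((continuous_sin.pow n).intervalIntegrable _ _)
      ((continuous_sin.pow n).intervalIntegrable _ _)).symm
  have h4 : ∫ x in π..(2 * π), sin x ^ n = (-1 : ℝ) ^ n * ∫ x in (0:ℝ)..π, sin x ^ n := by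
    have := intervalIntegral.integral_comp_add_right (fun x => sin x ^ n) π (a := 0) (b := π)
    rw [show (0:ℝ) + π = π by ring, show π + π = 2 * π by ring] at this
    rw [← this]
    have hx : ∀ x : ℝ, sin (x + π) ^ n = (-1:ℝ)^n * sin x ^ n := fun x => by
      rw [Real.sin_add_pi, neg_pow]
    simp only [hx]
    rw [intervalIntegral.integral_const_mul]
  rw [h3, h4]; ring

lemma exp_eq_tsum_real (y : ℝ) : Real.exp y = ∑' n : ℕ, y ^ n / (Nat.factorial n : ℝ) := by
  rw [Real.exp_eq_exp_ℝ, NormedSpace.exp_eq_tsum_div]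

lemma integral_exp_mul_cos (z : ℝ) :
    ∫ θ in (-π)..π, Real.exp (z * cos θ) = 2 * π * besselI0 z := by
  have hpi := pi_pos
  have hle : (-π : ℝ) ≤ π := by linarith
  have hvol : (volume (Ioc (-π) π)).toReal = 2 * π := by
    rw [Real.volume_Ioc, ENNReal.toReal_ofReal (by linarith)]; ring
  set F : ℕ → ℝ → ℝ := fun n θ => (z * cos θ) ^ n / (Nat.factorial n : ℝ) with hF
  have hFint : ∀ n : ℕ, IntegrableOn (F n) (Ioc (-π) π) volume := fun n =>
    Continuous.integrableOn_Ioc (by fun_prop)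
  have hbound : ∀ n : ℕ, ∀ θ : ℝ, ‖F n θ‖ ≤ |z| ^ n / (Nat.factorial n : ℝ) := by
    intro n θ
    rw [hF]
    simp only [norm_div, norm_pow, Real.norm_eq_abs, Nat.abs_cast]
    have h2 : |z * cos θ| ≤ |z| := by
      rw [abs_mul]
      calc |z| * |cos θ| ≤ |z| * 1 := by gcongr; exact abs_cos_le_one θ
      _ = |z| := mul_one _
    have hfac : (0:ℝ) < (Nat.factorial n : ℝ) := by positivity
    exact (div_le_div_iff_of_pos_right hfac).mpr (pow_le_pow_left₀ (abs_nonneg _) h2 n)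
  have hsum : Summable (fun n : ℕ => ∫ θ in Ioc (-π) π, ‖F n θ‖) := by
    refine Summable.of_nonneg_of_le (fun n => integral_nonneg fun θ => norm_nonneg _)
      (fun n => ?_) (((Real.summable_pow_div_factorial |z|).mul_left (2 * π)))
    calc ∫ θ in Ioc (-π) π, ‖F n θ‖
        ≤ ∫ _θ in Ioc (-π) π, |z| ^ n / (Nat.factorial n : ℝ) := by
          refine integral_mono_of_nonneg (Filter.Eventually.of_forall fun θ => norm_nonneg _)
            (integrableOn_const (by rw [Real.volume_Ioc]; exact ENNReal.ofReal_ne_top))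
            (Filter.Eventually.of_forall fun θ => hbound n θ)
      _ = 2 * π * (|z| ^ n / (Nat.factorial n : ℝ)) := by
          rw [setIntegral_const, measureReal_def, hvol, smul_eq_mul]
  have hswap : ∑' n : ℕ, ∫ θ in Ioc (-π) π, F n θ = ∫ θ in Ioc (-π) π, Real.exp (z * cos θ) := by
    rw [integral_tsum_of_summable_integral_norm hFint hsum]
    refine setIntegral_congr_fun measurableSet_Ioc fun θ _ => ?_
    rw [exp_eq_tsum_real]
  have hterm : ∀ n : ℕ, ∫ θ in Ioc (-π) π, F n θ
      = z ^ n / (Nat.factorial n : ℝ) * ((1 + (-1 : ℝ) ^ n) * ∫ x in (0:ℝ)..π, sin x ^ n) := by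
    intro n
    have h1 : ∀ θ : ℝ, F n θ = z ^ n / (Nat.factorial n : ℝ) * cos θ ^ n := fun θ => by
      rw [hF]; simp only [mul_pow]; ring
    simp only [h1]
    rw [MeasureTheory.integral_const_mul]
    congr 1
    rw [← integral_cos_pow_sym n, intervalIntegral.integral_of_le hle]
  set f : ℕ → ℝ := fun n =>
    z ^ n / (Nat.factorial n : ℝ) * ((1 + (-1 : ℝ) ^ n) * ∫ x in (0:ℝ)..π, sin x ^ n) with hf
  rw [intervalIntegral.integral_of_le hle, ← hswap, tsum_congr hterm]
  set f : ℕ → ℝ := fun n =>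
    z ^ n / (Nat.factorial n : ℝ) * ((1 + (-1 : ℝ) ^ n) * ∫ x in (0:ℝ)..π, sin x ^ n) with hf
  have hfeven : ∀ k : ℕ, f (2 * k) = 2 * π * ((z / 2) ^ (2 * k) / ((Nat.factorial k : ℝ)) ^ 2) := by
    intro k
    rw [hf]
    simp only []
    rw [integral_sin_pow_even, prod_odd_div k]
    have hneg : (-1 : ℝ) ^ (2 * k) = 1 := by
      rw [pow_mul]; norm_num
    rw [hneg]
    have h2 : (z / 2) ^ (2 * k) = z ^ (2 * k) / 4 ^ k := by
      have h22 : (2:ℝ) ^ (2 * k) = 4 ^ k := by rw [pow_mul]; norm_num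
      rw [div_pow, h22]
    rw [h2]
    have hfk : ((Nat.factorial k : ℝ)) ≠ 0 := Nat.cast_ne_zero.mpr (Nat.factorial_ne_zero _)
    have hf2k : ((Nat.factorial (2 * k) : ℝ)) ≠ 0 := Nat.cast_ne_zero.mpr (Nat.factorial_ne_zero _)
    have h4 : (4 : ℝ) ^ k ≠ 0 := by positivity
    field_simp
    ring
  have heven : HasSum (fun k => f (2 * k)) (2 * π * besselI0 z) := by
    have h2 := ((summable_besselI0 z).hasSum.mul_left (2 * π))
    rw [show (∑' k : ℕ, (z / 2) ^ (2 * k) / ((Nat.factorial k : ℝ)) ^ 2) = besselI0 z from rfl] at h2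
    exact h2.congr_fun fun k => hfeven k
  have hodd : HasSum (fun k => f (2 * k + 1)) 0 := by
    have hzero : (fun k : ℕ => f (2 * k + 1)) = fun _ => (0 : ℝ) := by
      funext k
      rw [hf]
      simp only []
      have hneg : (-1 : ℝ) ^ (2 * k + 1) = -1 := by
        rw [pow_succ, pow_mul]; norm_num
      rw [hneg]
      ring
    rw [hzero]
    exact hasSum_zero
  have := (heven.even_add_odd hodd).tsum_eq
  rw [add_zero] at this
  exact this

lemma besselI0_zero : besselI0 0 = 1 := by
  rw [besselI0]
  rw [tsum_eq_single 0 (fun k hk => by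
    simp [zero_pow (by omega : 2 * k ≠ 0)])]
  simp

lemma integral_exp_cos_add (u w : ℝ) :
    ∫ θ in (-π)..π, Real.exp (u * cos θ + w * sin θ)
      = 2 * π * besselI0 (Real.sqrt (u ^ 2 + w ^ 2)) := by
  have hpi := pi_pos
  rcases eq_or_ne (u ^ 2 + w ^ 2) 0 with h0 | h0
  · have hu : u = 0 := by nlinarith [sq_nonneg u, sq_nonneg w]
    have hw : w = 0 := by nlinarith [sq_nonneg u, sq_nonneg w]
    subst hu; subst hw
    simp only [zero_mul, add_zero, Real.exp_zero, add_zero]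
    rw [intervalIntegral.integral_const]
    simp [besselI0_zero, Real.sqrt_zero]
    ring
  · set c : ℝ := Real.sqrt (u ^ 2 + w ^ 2) with hc
    have hc0 : 0 < c := Real.sqrt_pos.mpr (lt_of_le_of_ne (by positivity) (Ne.symm h0))
    set ζ : ℂ := (u : ℂ) + (w : ℂ) * Complex.I with hζ
    have hζ0 : ζ ≠ 0 := by
      intro h
      have hre : ζ.re = u := by simp [hζ]
      have him : ζ.im = w := by simp [hζ]
      rw [h] at hre him
      simp at hre him
      apply h0; rw [← hre, ← him]; ring
    have habs : ‖ζ‖ = c := by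
      rw [hζ, Complex.norm_add_mul_I, hc]
    set φ : ℝ := Complex.arg ζ with hφ
    have hcos : u = c * Real.cos φ := by
      rw [hφ, Complex.cos_arg hζ0, habs]
      field_simp
      simp [hζ]
    have hsin : w = c * Real.sin φ := by
      rw [hφ, Complex.sin_arg, habs]
      field_simp
      simp [hζ]
    have hint : ∀ θ : ℝ, u * cos θ + w * sin θ = c * cos (θ - φ) := by
      intro θ
      rw [Real.cos_sub, hcos, hsin]; ring
    simp only [hint]
    have hcomp := intervalIntegral.integral_comp_sub_right
      (fun θ => Real.exp (c * cos θ)) φ (a := -π) (b := π)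
    rw [hcomp]
    have hper : Function.Periodic (fun θ : ℝ => Real.exp (c * cos θ)) (2 * π) := fun x => by
      simp [Real.cos_periodic x]
    have hshift := hper.intervalIntegral_add_eq (-π - φ) (-π)
    rw [show -π - φ + 2 * π = π - φ by ring, show -π + 2 * π = π by ring] at hshift
    rw [hshift]
    exact integral_exp_mul_cos c

lemma integrableOn_polar_of_integrable {f : ℝ × ℝ → ℝ} (hf : Integrable f) :
    IntegrableOn (fun p => p.1 • f (polarCoord.symm p)) polarCoord.target := by
  set B : ℝ × ℝ → ℝ × ℝ →L[ℝ] ℝ × ℝ := fun p =>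
    LinearMap.toContinuousLinearMap (Matrix.toLin (Module.Basis.finTwoProd ℝ) (Module.Basis.finTwoProd ℝ)
      !![Real.cos p.2, -p.1 * Real.sin p.2; Real.sin p.2, p.1 * Real.cos p.2])
  have A : ∀ p ∈ polarCoord.target, HasFDerivWithinAt polarCoord.symm (B p) polarCoord.target p :=
    fun p _ => (hasFDerivAt_polarCoord_symm p).hasFDerivWithinAt
  have B_det : ∀ p, (B p).det = p.1 := by
    intro p
    conv_rhs => rw [← one_mul p.1, ← cos_sq_add_sin_sq p.2]
    simp only [B, neg_mul, LinearMap.det_toContinuousLinearMap, LinearMap.det_toLin,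
      Matrix.det_fin_two_of, sub_neg_eq_add]
    ring
  have hinj : InjOn polarCoord.symm polarCoord.target := by
    have := polarCoord.symm.injOn
    rwa [OpenPartialHomeomorph.symm_source] at this
  have himg : polarCoord.symm '' polarCoord.target = polarCoord.source := by
    rw [← polarCoord.symm_image_target_eq_source]
  have h1 : IntegrableOn f (polarCoord.symm '' polarCoord.target) := by
    rw [himg]; exact hf.integrableOn
  have h2 := (integrableOn_image_iff_integrableOn_abs_det_fderiv_smul volume
    polarCoord.open_target.measurableSet A hinj f).mp h1
  refine h2.congr_fun (fun p hp => ?_) polarCoord.open_target.measurableSet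
  dsimp only; rw [B_det, abs_of_pos hp.1]

lemma gaussian_prod_withDensity (a b : ℝ) :
    (gaussianReal a 1).prod (gaussianReal b 1)
      = (volume.prod volume).withDensity
          (fun p => gaussianPDF a 1 p.1 * gaussianPDF b 1 p.2) := by
  refine Measure.prod_eq fun s t hs ht => ?_
  rw [withDensity_apply _ (hs.prod ht), ← Measure.prod_restrict,
    MeasureTheory.lintegral_prod_mul (measurable_gaussianPDF a 1).aemeasurable
      (measurable_gaussianPDF b 1).aemeasurable,
    gaussianReal_apply _ one_ne_zero s, gaussianReal_apply _ one_ne_zero t]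

lemma gaussian_prod_apply_eq_integral (a b : ℝ) {S : Set (ℝ × ℝ)} (hS : MeasurableSet S) :
    (gaussianReal a 1).prod (gaussianReal b 1) S
      = ENNReal.ofReal
          (∫ p in S, gaussianPDFReal a 1 p.1 * gaussianPDFReal b 1 p.2) := by
  rw [gaussian_prod_withDensity, withDensity_apply _ hS]
  rw [ofReal_integral_eq_lintegral_ofReal]
  · refine lintegral_congr fun p => ?_
    rw [gaussianPDF_def, gaussianPDF_def, ENNReal.ofReal_mul (gaussianPDFReal_nonneg _ _ _)]
  · exact ((integrable_gaussianPDFReal a 1).mul_prod (integrable_gaussianPDFReal b 1)).integrableOn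
  · exact Filter.Eventually.of_forall fun p =>
      mul_nonneg (gaussianPDFReal_nonneg _ _ _) (gaussianPDFReal_nonneg _ _ _)

lemma key (a b s : ℝ) (hs : 0 ≤ s) :
    ((gaussianReal a 1).prod (gaussianReal b 1)) {p : ℝ × ℝ | p.1 ^ 2 + p.2 ^ 2 > s}
      = ENNReal.ofReal (marcumQ1 (Real.sqrt (a ^ 2 + b ^ 2)) (Real.sqrt s)) := by
  have hpi := pi_pos
  set c := Real.sqrt (a ^ 2 + b ^ 2) with hcdef
  have hc0 : 0 ≤ c := Real.sqrt_nonneg _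
  have hc2 : c ^ 2 = a ^ 2 + b ^ 2 := Real.sq_sqrt (by positivity)
  have hS : MeasurableSet {p : ℝ × ℝ | p.1 ^ 2 + p.2 ^ 2 > s} := by
    have : {p : ℝ × ℝ | p.1 ^ 2 + p.2 ^ 2 > s} = {p : ℝ × ℝ | s < p.1 ^ 2 + p.2 ^ 2} := rfl
    rw [this]
    exact measurableSet_lt measurable_const (by fun_prop)
  rw [gaussian_prod_apply_eq_integral a b hS]
  congr 1
  set h : ℝ × ℝ → ℝ := fun p => gaussianPDFReal a 1 p.1 * gaussianPDFReal b 1 p.2 with hh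
  have h_int : Integrable h :=
    (integrable_gaussianPDFReal a 1).mul_prod (integrable_gaussianPDFReal b 1)
  set G : ℝ × ℝ → ℝ := fun p =>
    ((Ioi (Real.sqrt s)).indicator
        (fun r => r * (2 * π)⁻¹ * Real.exp (-(r ^ 2 + c ^ 2) / 2)) p.1)
      * Real.exp (p.1 * a * Real.cos p.2 + p.1 * b * Real.sin p.2) with hG
  have hEq : EqOn
      (fun p : ℝ × ℝ =>
        p.1 • ({p : ℝ × ℝ | p.1 ^ 2 + p.2 ^ 2 > s}.indicator h) (polarCoord.symm p))
      G polarCoord.target := by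
    rintro ⟨r, θ⟩ hp
    have hr0 : (0:ℝ) < r := hp.1
    have hsymm : polarCoord.symm (r, θ) = (r * Real.cos θ, r * Real.sin θ) := rfl
    have hrad : (r * Real.cos θ) ^ 2 + (r * Real.sin θ) ^ 2 = r ^ 2 := by
      have ht := Real.sin_sq_add_cos_sq θ
      nlinarith [ht]
    have hiff : ((r * Real.cos θ, r * Real.sin θ) ∈ {p : ℝ × ℝ | p.1 ^ 2 + p.2 ^ 2 > s})
        ↔ Real.sqrt s < r := by
      simp only [mem_setOf_eq, hrad]
      exact (gt_iff_lt).trans (Real.sqrt_lt' hr0).symm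
    simp only [hG, hsymm]
    by_cases hmem : r ∈ Ioi (Real.sqrt s)
    · rw [Set.indicator_of_mem (hiff.mpr (Set.mem_Ioi.mp hmem)), Set.indicator_of_mem hmem]
      rw [hh]
      simp only [gaussianPDFReal, NNReal.coe_one, mul_one]
      have hsq : (Real.sqrt (2 * π))⁻¹ * (Real.sqrt (2 * π))⁻¹ = (2 * π)⁻¹ := by
        rw [← mul_inv, Real.mul_self_sqrt (by positivity)]
      have hexp : Real.exp (-(r * Real.cos θ - a) ^ 2 / 2)
            * Real.exp (-(r * Real.sin θ - b) ^ 2 / 2)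
          = Real.exp (-(r ^ 2 + c ^ 2) / 2)
            * Real.exp (r * a * Real.cos θ + r * b * Real.sin θ) := by
        rw [← Real.exp_add, ← Real.exp_add]
        congr 1
        have ht := Real.sin_sq_add_cos_sq θ
        nlinarith [ht, hc2]
      rw [smul_eq_mul]
      calc r * ((Real.sqrt (2 * π))⁻¹ * Real.exp (-(r * Real.cos θ - a) ^ 2 / 2)
            * ((Real.sqrt (2 * π))⁻¹ * Real.exp (-(r * Real.sin θ - b) ^ 2 / 2)))
          = r * ((Real.sqrt (2 * π))⁻¹ * (Real.sqrt (2 * π))⁻¹)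
            * (Real.exp (-(r * Real.cos θ - a) ^ 2 / 2)
              * Real.exp (-(r * Real.sin θ - b) ^ 2 / 2)) := by ring
        _ = r * (2 * π)⁻¹ * (Real.exp (-(r ^ 2 + c ^ 2) / 2)
              * Real.exp (r * a * Real.cos θ + r * b * Real.sin θ)) := by rw [hsq, hexp]
        _ = r * (2 * π)⁻¹ * Real.exp (-(r ^ 2 + c ^ 2) / 2)
              * Real.exp (r * a * Real.cos θ + r * b * Real.sin θ) := by ring
    · rw [Set.indicator_of_notMem (fun hx => hmem (Set.mem_Ioi.mpr (hiff.mp hx))),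
        Set.indicator_of_notMem hmem]
      simp
  have hGint : IntegrableOn G polarCoord.target := by
    refine ((integrableOn_polar_of_integrable (h_int.indicator hS)).congr_fun hEq
      polarCoord.open_target.measurableSet)
  calc ∫ p in {p : ℝ × ℝ | p.1 ^ 2 + p.2 ^ 2 > s}, h p
      = ∫ p, ({p : ℝ × ℝ | p.1 ^ 2 + p.2 ^ 2 > s}.indicator h) p := by
        rw [MeasureTheory.integral_indicator hS]
    _ = ∫ p in polarCoord.target,
          p.1 • ({p : ℝ × ℝ | p.1 ^ 2 + p.2 ^ 2 > s}.indicator h) (polarCoord.symm p) := by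
        rw [integral_comp_polarCoord_symm]
    _ = ∫ p in polarCoord.target, G p :=
        setIntegral_congr_fun polarCoord.open_target.measurableSet hEq
    _ = ∫ r in Ioi (0:ℝ), ∫ θ in Ioo (-π) π, G (r, θ) := by
        rw [show polarCoord.target = Ioi (0:ℝ) ×ˢ Ioo (-π) π from rfl] at hGint ⊢
        rw [Measure.volume_eq_prod] at hGint ⊢
        exact setIntegral_prod _ hGint
    _ = ∫ r in Ioi (0:ℝ),
          ((Ioi (Real.sqrt s)).indicator
            (fun r => r * (2 * π)⁻¹ * Real.exp (-(r ^ 2 + c ^ 2) / 2)) r)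
          * (2 * π * besselI0 (c * r)) := by
        refine setIntegral_congr_fun measurableSet_Ioi fun r hr => ?_
        have hr0 : (0:ℝ) < r := hr
        rw [hG]
        simp only []
        rw [MeasureTheory.integral_const_mul]
        congr 1
        have h1 : ∫ θ in Ioo (-π) π, Real.exp (r * a * Real.cos θ + r * b * Real.sin θ)
            = ∫ θ in (-π)..π, Real.exp ((r * a) * Real.cos θ + (r * b) * Real.sin θ) := by
          rw [intervalIntegral.integral_of_le (by linarith), integral_Ioc_eq_integral_Ioo]
        rw [h1, integral_exp_cos_add (r * a) (r * b)]
        congr 1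
        have h2 : (r * a) ^ 2 + (r * b) ^ 2 = (c * r) ^ 2 := by
          linear_combination (-(r ^ 2)) * hc2
        rw [h2, Real.sqrt_sq (by positivity)]
    _ = ∫ r in Ioi (0:ℝ),
          ((Ioi (Real.sqrt s)).indicator
            (fun r => r * Real.exp (-(r ^ 2 + c ^ 2) / 2) * besselI0 (c * r)) r) := by
        refine setIntegral_congr_fun measurableSet_Ioi fun r _ => ?_
        by_cases hmem : r ∈ Ioi (Real.sqrt s)
        · rw [Set.indicator_of_mem hmem, Set.indicator_of_mem hmem]
          field_simp
        · rw [Set.indicator_of_notMem hmem, Set.indicator_of_notMem hmem, zero_mul]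
    _ = ∫ r in Ioi (0:ℝ) ∩ Ioi (Real.sqrt s),
          r * Real.exp (-(r ^ 2 + c ^ 2) / 2) * besselI0 (c * r) := by
        rw [setIntegral_indicator measurableSet_Ioi]
    _ = marcumQ1 c (Real.sqrt s) := by
        rw [Set.Ioi_inter_Ioi, max_eq_right (Real.sqrt_nonneg s), marcumQ1,
          MeasureTheory.integral_Ici_eq_integral_Ioi]


/-- Survival function of the scaled noncentral χ²(2) statistic: for `s ≥ 0`,
`(N(a,σ²) ⊗ N(b,σ²)){(x,y) : x² + y² > s} = Q₁(√(a²+b²)/σ, √s/σ)`. -/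
theorem noncentral_chiSq_two_survival (a b σ : ℝ) (hσ : 0 < σ) (s : ℝ) (hs : 0 ≤ s) :
    ((gaussianReal a (σ ^ 2).toNNReal).prod (gaussianReal b (σ ^ 2).toNNReal))
        {p : ℝ × ℝ | p.1 ^ 2 + p.2 ^ 2 > s} =
      ENNReal.ofReal (marcumQ1 (Real.sqrt (a ^ 2 + b ^ 2) / σ) (Real.sqrt s / σ)) := by
  have hσ0 : σ ≠ 0 := hσ.ne'
  have hσ2 : (0:ℝ) < σ ^ 2 := by positivity
  set v : ℝ≥0 := (σ ^ 2).toNNReal with hv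
  have hmap1 : ∀ m : ℝ, (gaussianReal m v).map (σ⁻¹ * ·) = gaussianReal (σ⁻¹ * m) 1 := by
    intro m
    rw [gaussianReal_map_const_mul σ⁻¹]
    congr 1
    apply NNReal.coe_injective
    push_cast
    rw [hv, Real.coe_toNNReal _ (sq_nonneg σ)]
    field_simp
  have hT : Measurable (Prod.map (fun x : ℝ => σ⁻¹ * x) (fun x : ℝ => σ⁻¹ * x)) :=
    (measurable_const_mul σ⁻¹).prodMap (measurable_const_mul σ⁻¹)
  have hprodmap :
      ((gaussianReal a v).prod (gaussianReal b v)).map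
          (Prod.map (fun x : ℝ => σ⁻¹ * x) (fun x : ℝ => σ⁻¹ * x))
        = (gaussianReal (σ⁻¹ * a) 1).prod (gaussianReal (σ⁻¹ * b) 1) := by
    rw [← hmap1 a, ← hmap1 b,
      Measure.map_prod_map _ _ (measurable_const_mul σ⁻¹) (measurable_const_mul σ⁻¹)]
  have hS' : MeasurableSet {p : ℝ × ℝ | p.1 ^ 2 + p.2 ^ 2 > s / σ ^ 2} := by
    have : {p : ℝ × ℝ | p.1 ^ 2 + p.2 ^ 2 > s / σ ^ 2}
        = {p : ℝ × ℝ | s / σ ^ 2 < p.1 ^ 2 + p.2 ^ 2} := rfl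
    rw [this]; exact measurableSet_lt measurable_const (by fun_prop)
  have hpre : Prod.map (fun x : ℝ => σ⁻¹ * x) (fun x : ℝ => σ⁻¹ * x) ⁻¹'
        {p : ℝ × ℝ | p.1 ^ 2 + p.2 ^ 2 > s / σ ^ 2}
      = {p : ℝ × ℝ | p.1 ^ 2 + p.2 ^ 2 > s} := by
    ext ⟨x, y⟩
    simp only [Set.mem_preimage, Prod.map, Set.mem_setOf_eq, gt_iff_lt]
    have hxy : (σ⁻¹ * x) ^ 2 + (σ⁻¹ * y) ^ 2 = (x ^ 2 + y ^ 2) / σ ^ 2 := by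
      field_simp
    rw [hxy, div_lt_div_iff_of_pos_right hσ2]
  calc ((gaussianReal a v).prod (gaussianReal b v)) {p : ℝ × ℝ | p.1 ^ 2 + p.2 ^ 2 > s}
      = ((gaussianReal a v).prod (gaussianReal b v))
          (Prod.map (fun x : ℝ => σ⁻¹ * x) (fun x : ℝ => σ⁻¹ * x) ⁻¹'
            {p : ℝ × ℝ | p.1 ^ 2 + p.2 ^ 2 > s / σ ^ 2}) := by rw [hpre]
    _ = (((gaussianReal a v).prod (gaussianReal b v)).map
          (Prod.map (fun x : ℝ => σ⁻¹ * x) (fun x : ℝ => σ⁻¹ * x)))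
          {p : ℝ × ℝ | p.1 ^ 2 + p.2 ^ 2 > s / σ ^ 2} := (Measure.map_apply hT hS').symm
    _ = ((gaussianReal (σ⁻¹ * a) 1).prod (gaussianReal (σ⁻¹ * b) 1))
          {p : ℝ × ℝ | p.1 ^ 2 + p.2 ^ 2 > s / σ ^ 2} := by rw [hprodmap]
    _ = ENNReal.ofReal (marcumQ1 (Real.sqrt ((σ⁻¹ * a) ^ 2 + (σ⁻¹ * b) ^ 2))
          (Real.sqrt (s / σ ^ 2))) := key _ _ _ (by positivity)
    _ = ENNReal.ofReal (marcumQ1 (Real.sqrt (a ^ 2 + b ^ 2) / σ) (Real.sqrt s / σ)) := by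
        congr 2
        · have hxy : (σ⁻¹ * a) ^ 2 + (σ⁻¹ * b) ^ 2 = (a ^ 2 + b ^ 2) / σ ^ 2 := by field_simp
          rw [hxy, Real.sqrt_div (by positivity), Real.sqrt_sq hσ.le]
        · rw [Real.sqrt_div hs, Real.sqrt_sq hσ.le]

end Aux
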